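/- Let S be a nearly epsilon-strongly G-graded ring such that each S_g S_{g⁻¹} is s-unital, and let M be a graded left S-module. Then the multiplication map τ_M: S ⊗_R M_e → ⊕_{g∈G} (S_g S_{g⁻¹}) M_g, s ⊗ m ↦ sm, is an isomorphism of graded S-modules, where R = S_e and (S ⊗_R M_e)_g = S_g ⊗_R M_e. -/

import Mathlib

open Pointwise

section Defs

variable {G : Type} [AddGroup G] [DecidableEq G]
variable {A : Type} [Ring A]
variable {M : Type} [AddCommGroup M] [Module A M]

/-- The additive subgroup of `M` consisting of finite sums of products `a • m`
with `a ∈ S` and `m ∈ N`. -/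
def prodSMul (S : AddSubgroup A) (N : AddSubgroup M) : AddSubgroup M where
  __ := S.toAddSubmonoid • N.toAddSubmonoid
  neg_mem' {x} hx := by
    refine AddSubmonoid.smul_induction_on hx (fun a ha m hm => ?_) (fun x y hx hy => ?_)
    · rw [show -(a • m) = (-a) • m by rw [neg_smul]]
      exact AddSubmonoid.smul_mem_smul (S.neg_mem ha) hm
    · rw [neg_add]
      exact (S.toAddSubmonoid • N.toAddSubmonoid).add_mem hx hy

/-- A (possibly non-unital) ring, here an additive subgroup of `A` closed under
multiplication, is *s-unital* if every element has a left and a right local unit in it. -/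
def IsSUnitalSub (I : AddSubgroup A) : Prop :=
  ∀ a ∈ I, ∃ u ∈ I, ∃ v ∈ I, u * a = a ∧ a * v = a

variable (𝒜 : G → AddSubgroup A)

/-- `S` is symmetrically graded if `S_g S_{g⁻¹} S_g = S_g` for all `g`. -/
def IsSymmetricallyGraded : Prop := ∀ g : G, 𝒜 g * 𝒜 (-g) * 𝒜 g = 𝒜 g

/-- `S` is nearly epsilon-strongly graded if each `S_g` is an s-unital
`(S_g S_{g⁻¹}, S_{g⁻¹} S_g)`-bimodule: for every `s ∈ S_g` there are
`u ∈ S_g S_{g⁻¹}` and `v ∈ S_{g⁻¹} S_g` with `u s = s = s v`. -/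
def IsNearlyEpsilonStrong : Prop :=
  ∀ g : G, ∀ s ∈ 𝒜 g, ∃ u ∈ 𝒜 g * 𝒜 (-g), ∃ v ∈ 𝒜 (-g) * 𝒜 g, u * s = s ∧ s * v = s


section Stmt19

open scoped TensorProduct

variable {G : Type} [AddGroup G] [DecidableEq G]
variable {A : Type} [Ring A] (𝒜 : G → AddSubgroup A) [GradedRing 𝒜]
variable {M : Type} [AddCommGroup M] [Module A M]
variable (ℳ : G → AddSubgroup M) [SetLike.GradedSMul 𝒜 ℳ] [DirectSum.Decomposition ℳ]

/-- The submodule of balanced relations defining `S ⊗_R M_e` over `R = S_e`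
as a quotient of `S ⊗_ℤ M_e`. -/
def balancedRelFull : Submodule ℤ (A ⊗[ℤ] ↥(ℳ 0)) :=
  Submodule.span ℤ
    { x | ∃ (s : A) (r : ↥(𝒜 0)) (m : ↥(ℳ 0)),
        x = (s * r.1) ⊗ₜ[ℤ] m
          - s ⊗ₜ[ℤ] (⟨r.1 • m.1, by
              have := SetLike.GradedSMul.smul_mem r.2 m.2; rwa [zero_vadd] at this⟩ :
            ↥(ℳ 0)) }

/-- The tensor product `S ⊗_R M_e` over `R = S_e`, realized as a quotient of the
tensor product over `ℤ` by the balanced relations. -/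
def tensorFull := (A ⊗[ℤ] ↥(ℳ 0)) ⧸ balancedRelFull 𝒜 ℳ

noncomputable instance : AddCommGroup (tensorFull 𝒜 ℳ) :=
  inferInstanceAs (AddCommGroup ((A ⊗[ℤ] ↥(ℳ 0)) ⧸ balancedRelFull 𝒜 ℳ))

noncomputable instance : Module ℤ (tensorFull 𝒜 ℳ) :=
  inferInstanceAs (Module ℤ ((A ⊗[ℤ] ↥(ℳ 0)) ⧸ balancedRelFull 𝒜 ℳ))

-- aux lemmas appended to prelude
lemma gsmul_mem {g : G} {a : A} {m : M} (ha : a ∈ 𝒜 g) (hm : m ∈ ℳ 0) : a • m ∈ ℳ g := by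
  have := SetLike.GradedSMul.smul_mem ha hm
  simpa using this

lemma gsmul_mem0 {g : G} {b : A} {m : M} (hb : b ∈ 𝒜 (-g)) (hm : m ∈ ℳ g) : b • m ∈ ℳ 0 := by
  have := SetLike.GradedSMul.smul_mem hb hm
  simpa using this

lemma gmul_mem0 {g : G} {b s : A} (hb : b ∈ 𝒜 (-g)) (hs : s ∈ 𝒜 g) : b * s ∈ 𝒜 (0:G) := by
  have := SetLike.mul_mem_graded hb hs
  simpa using this

lemma Ig_mul_mem {g : G} {x y : A} (hx : x ∈ 𝒜 g * 𝒜 (-g)) (hy : y ∈ 𝒜 g * 𝒜 (-g)) :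
    x * y ∈ 𝒜 g * 𝒜 (-g) := by
  refine AddSubmonoid.mul_induction_on hx ?_ ?_
  · intro a ha b hb
    refine AddSubmonoid.mul_induction_on hy ?_ ?_
    · intro c hc d hd
      have hbc : b * c ∈ 𝒜 (0:G) := gmul_mem0 𝒜 hb hc
      have hbcd : (b * c) * d ∈ 𝒜 (-g) := by
        have := SetLike.mul_mem_graded hbc hd
        simpa using this
      have : a * b * (c * d) = a * ((b * c) * d) := by noncomm_ring
      rw [this]
      exact AddSubmonoid.mul_mem_mul ha hbcd
    · intro y1 y2 h1 h2
      rw [mul_add]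
      exact add_mem h1 h2
  · intro x1 x2 h1 h2
    rw [add_mul]
    exact add_mem h1 h2

lemma Ig_mul_g_mem {g : G} {x y : A} (hx : x ∈ 𝒜 g * 𝒜 (-g)) (hy : y ∈ 𝒜 g) :
    x * y ∈ 𝒜 g := by
  refine AddSubmonoid.mul_induction_on hx ?_ ?_
  · intro a ha b hb
    have ha' : a ∈ 𝒜 g := ha
    have h1 : b * y ∈ 𝒜 (0:G) := gmul_mem0 𝒜 hb hy
    have h2 : a * (b * y) ∈ 𝒜 g := by
      have := SetLike.mul_mem_graded ha' h1
      rwa [add_zero] at this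
    rw [mul_assoc]
    exact h2
  · intro x1 x2 h1 h2
    rw [add_mul]
    exact add_mem h1 h2

lemma exists_left_unit (I J : AddSubgroup A)
    (hmul : ∀ {x y : A}, x ∈ I → y ∈ I → x * y ∈ I)
    (hIJ : ∀ {x y : A}, x ∈ I → y ∈ J → x * y ∈ J)
    (hloc : ∀ b ∈ J, ∃ u ∈ I, u * b = b)
    {ι : Type} (F : Finset ι) (a : ι → A) :
    (∀ i ∈ F, a i ∈ J) → ∃ u ∈ I, ∀ i ∈ F, u * a i = a i := by
  classical
  induction F using Finset.induction_on with
  | empty => exact fun _ => ⟨0, I.zero_mem, by simp⟩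
  | @insert j F hj ih =>
    intro ha
    obtain ⟨u₁, hu₁, hu₁f⟩ := ih fun i hi => ha i (Finset.mem_insert_of_mem hi)
    have haj : a j ∈ J := ha j (Finset.mem_insert_self j F)
    obtain ⟨u₂, hu₂, hu₂c⟩ := hloc (a j - u₁ * a j) (J.sub_mem haj (hIJ hu₁ haj))
    refine ⟨u₁ + u₂ - u₂ * u₁, I.sub_mem (I.add_mem hu₁ hu₂) (hmul hu₂ hu₁), ?_⟩
    intro i hi
    rcases Finset.mem_insert.mp hi with rfl | hi
    · rw [mul_sub] at hu₂c
      rw [sub_mul, add_mul, mul_assoc, add_sub_assoc, hu₂c]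
      abel
    · rw [sub_mul, add_mul, mul_assoc, hu₁f i hi]
      abel
set_option linter.unusedSectionVars false

/-- The bilinear multiplication map `A × ℳ₀ → M`. -/
def muBil : A →ₗ[ℤ] ↥(ℳ 0) →ₗ[ℤ] M :=
  LinearMap.mk₂ ℤ (fun a m => a • (m : M))
    (fun a b m => add_smul a b (m : M))
    (fun z a m => smul_assoc z a (m : M))
    (fun a m n => by simp [smul_add])
    (fun z a m => by
      show a • ((z • m : ↥(ℳ 0)) : M) = z • (a • (m : M))
      rw [show ((z • m : ↥(ℳ 0)) : M) = z • (m : M) from rfl, smul_comm])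

/-- The multiplication map on the full tensor product over `ℤ`. -/
noncomputable def tau0 : (A ⊗[ℤ] ↥(ℳ 0)) →ₗ[ℤ] M := TensorProduct.lift (muBil ℳ)

@[simp] lemma tau0_tmul (s : A) (m : ↥(ℳ 0)) : tau0 ℳ (s ⊗ₜ[ℤ] m) = s • (m : M) := rfl

lemma bal_le_ker : balancedRelFull 𝒜 ℳ ≤ LinearMap.ker (tau0 ℳ) := by
  rw [balancedRelFull, Submodule.span_le]
  rintro x ⟨s, r, m, rfl⟩
  simp [LinearMap.mem_ker, mul_smul]

/-- The multiplication map on `tensorFull`. -/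
noncomputable def tauQ : tensorFull 𝒜 ℳ →ₗ[ℤ] M :=
  Submodule.liftQ (balancedRelFull 𝒜 ℳ) (tau0 ℳ) (bal_le_ker 𝒜 ℳ)

@[simp] lemma tauQ_mk (x : A ⊗[ℤ] ↥(ℳ 0)) :
    tauQ 𝒜 ℳ (Submodule.Quotient.mk x) = tau0 ℳ x := rfl
lemma homog_smul_mem_prod (hS : IsNearlyEpsilonStrong 𝒜) {g : G} {s : A} (hs : s ∈ 𝒜 g)
    {m : M} (hm : m ∈ ℳ 0) : s • m ∈ prodSMul (𝒜 g * 𝒜 (-g)) (ℳ g) := by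
  obtain ⟨u, hu, v, hv, hus, -⟩ := hS g s hs
  have hsm : s • m ∈ ℳ g := gsmul_mem 𝒜 ℳ hs hm
  have key : u • (s • m) = s • m := by rw [← mul_smul, hus]
  rw [← key]
  exact AddSubmonoid.smul_mem_smul hu hsm

/-- Elements of the target are in the range of `tau0`. -/
lemma exists_preimage {x : M} (hx : x ∈ ⨆ g : G, prodSMul (𝒜 g * 𝒜 (-g)) (ℳ g)) :
    ∃ t : A ⊗[ℤ] ↥(ℳ 0), tau0 ℳ t = x := by
  refine AddSubgroup.iSup_induction (C := fun x => ∃ t, tau0 ℳ t = x)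
    (fun g => prodSMul (𝒜 g * 𝒜 (-g)) (ℳ g)) hx ?_ ⟨0, map_zero _⟩ ?_
  · intro g x hx
    refine AddSubmonoid.smul_induction_on hx ?_ ?_
    · intro u hu n hn
      clear hx x
      refine AddSubmonoid.mul_induction_on (C := fun u => ∃ t, tau0 ℳ t = u • n) hu ?_ ?_
      · intro a ha b hb
        refine ⟨a ⊗ₜ[ℤ] ⟨b • n, gsmul_mem0 𝒜 ℳ hb hn⟩, ?_⟩
        rw [tau0_tmul]
        show a • (b • n) = (a * b) • n
        rw [mul_smul]
      · rintro u₁ u₂ ⟨t1, ht1⟩ ⟨t2, ht2⟩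
        exact ⟨t1 + t2, by rw [map_add, ht1, ht2, ← add_smul]⟩
    · rintro x y ⟨t1, h1⟩ ⟨t2, h2⟩
      exact ⟨t1 + t2, by rw [map_add, h1, h2]⟩
  · rintro x y ⟨t1, h1⟩ ⟨t2, h2⟩
    exact ⟨t1 + t2, by rw [map_add, h1, h2]⟩
lemma eq_zero_of_sum_mem_graded (Γ : Finset G) (y : G → M) (hy : ∀ g, y g ∈ ℳ g)
    (h0 : ∑ g ∈ Γ, y g = 0) : ∀ g ∈ Γ, y g = 0 := by
  intro g₀ hg₀
  have h1 : ∀ g ∈ Γ, ((DirectSum.decompose ℳ (y g)) g₀ : M) = if g = g₀ then y g else 0 := by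
    intro g _
    split_ifs with h
    · subst h; exact DirectSum.decompose_of_mem_same ℳ (hy g)
    · exact DirectSum.decompose_of_mem_ne ℳ (hy g) h
  have h2 : ((DirectSum.decompose ℳ (∑ g ∈ Γ, y g)) g₀ : M) = y g₀ := by
    rw [DirectSum.decompose_sum, DFinsupp.finset_sum_apply]
    rw [AddSubmonoidClass.coe_finset_sum, Finset.sum_congr rfl h1, Finset.sum_ite_eq' Γ g₀ y,
      if_pos hg₀]
  rw [h0] at h2
  simpa using h2.symm

/-- Key lemma: a finite family of homogeneous tensors of degree `g` summing to `0`
under multiplication sums to `0` in `tensorFull`. -/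
lemma sum_mk_eq_zero (hS : IsNearlyEpsilonStrong 𝒜) (g : G)
    {ι : Type} (F : Finset ι) (s : ι → A) (m : ι → ↥(ℳ 0))
    (hs : ∀ i ∈ F, s i ∈ 𝒜 g) (h0 : ∑ i ∈ F, s i • ((m i : M)) = 0) :
    ∑ i ∈ F, (Submodule.Quotient.mk (s i ⊗ₜ[ℤ] m i) :
      (A ⊗[ℤ] ↥(ℳ 0)) ⧸ balancedRelFull 𝒜 ℳ) = 0 := by
  classical
  obtain ⟨u, hu, huf⟩ := exists_left_unit (𝒜 g * 𝒜 (-g)) (𝒜 g)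
    (fun hx hy => Ig_mul_mem 𝒜 hx hy) (fun hx hy => Ig_mul_g_mem 𝒜 hx hy)
    (fun b hb => by obtain ⟨u, hu, v, hv, hub, -⟩ := hS g b hb; exact ⟨u, hu, hub⟩) F s hs
  have key : ∀ u ∈ 𝒜 g * 𝒜 (-g),
      ∑ i ∈ F, (Submodule.Quotient.mk ((u * s i) ⊗ₜ[ℤ] m i) :
        (A ⊗[ℤ] ↥(ℳ 0)) ⧸ balancedRelFull 𝒜 ℳ) = 0 := by
    intro w hw
    refine AddSubmonoid.mul_induction_on
      (C := fun w => ∑ i ∈ F, (Submodule.Quotient.mk ((w * s i) ⊗ₜ[ℤ] m i) :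
        (A ⊗[ℤ] ↥(ℳ 0)) ⧸ balancedRelFull 𝒜 ℳ) = 0) hw ?_ ?_
    · intro a ha b hb
      -- Define the linear map x ↦ mk (a ⊗ x)
      set L : ↥(ℳ 0) →ₗ[ℤ] (A ⊗[ℤ] ↥(ℳ 0)) ⧸ balancedRelFull 𝒜 ℳ :=
        (balancedRelFull 𝒜 ℳ).mkQ.comp ((TensorProduct.mk ℤ A ↥(ℳ 0)) a) with hL
      set μ : ι → ↥(ℳ 0) := fun i =>
        if h : i ∈ F then ⟨(b * s i) • (m i : M), by
          have := SetLike.GradedSMul.smul_mem (gmul_mem0 𝒜 hb (hs i h)) (m i).2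
          rwa [zero_vadd] at this⟩ else 0 with hμ
      have step : ∀ i ∈ F, (Submodule.Quotient.mk ((a * b * s i) ⊗ₜ[ℤ] m i) :
          (A ⊗[ℤ] ↥(ℳ 0)) ⧸ balancedRelFull 𝒜 ℳ) = L (μ i) := by
        intro i hi
        have hbsi : b * s i ∈ 𝒜 (0 : G) := gmul_mem0 𝒜 hb (hs i hi)
        rw [hμ]
        simp only [dif_pos hi]
        rw [hL]
        show (Submodule.Quotient.mk ((a * b * s i) ⊗ₜ[ℤ] m i) :
            (A ⊗[ℤ] ↥(ℳ 0)) ⧸ balancedRelFull 𝒜 ℳ) = Submodule.Quotient.mk (a ⊗ₜ[ℤ] _)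
        rw [Submodule.Quotient.eq]
        rw [mul_assoc]
        exact Submodule.subset_span ⟨a, ⟨b * s i, hbsi⟩, m i, rfl⟩
      rw [Finset.sum_congr rfl step, ← map_sum]
      have hzero : (∑ i ∈ F, μ i) = 0 := by
        ext
        rw [AddSubmonoidClass.coe_finset_sum]
        have : ∀ i ∈ F, ((μ i : M)) = b • (s i • (m i : M)) := by
          intro i hi
          rw [hμ]
          simp only [dif_pos hi]
          exact mul_smul b (s i) _
        rw [Finset.sum_congr rfl this, ← Finset.smul_sum, h0, smul_zero]
        rfl
      rw [hzero, map_zero]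
    · intro x y hx hy
      have : ∀ i ∈ F, (Submodule.Quotient.mk (((x + y) * s i) ⊗ₜ[ℤ] m i) :
          (A ⊗[ℤ] ↥(ℳ 0)) ⧸ balancedRelFull 𝒜 ℳ)
          = Submodule.Quotient.mk ((x * s i) ⊗ₜ[ℤ] m i)
            + Submodule.Quotient.mk ((y * s i) ⊗ₜ[ℤ] m i) := by
        intro i _
        rw [add_mul, TensorProduct.add_tmul]
        rfl
      rw [Finset.sum_congr rfl this, Finset.sum_add_distrib, hx, hy, add_zero]
  have : ∀ i ∈ F, (Submodule.Quotient.mk (s i ⊗ₜ[ℤ] m i) :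
      (A ⊗[ℤ] ↥(ℳ 0)) ⧸ balancedRelFull 𝒜 ℳ)
      = Submodule.Quotient.mk ((u * s i) ⊗ₜ[ℤ] m i) := by
    intro i hi
    rw [huf i hi]
  rw [Finset.sum_congr rfl this]
  exact key u hu

lemma mk_eq_zero_of_tau0_eq_zero (hS : IsNearlyEpsilonStrong 𝒜)
    {t : A ⊗[ℤ] ↥(ℳ 0)} (ht : tau0 ℳ t = 0) :
    (Submodule.Quotient.mk t : (A ⊗[ℤ] ↥(ℳ 0)) ⧸ balancedRelFull 𝒜 ℳ) = 0 := by
  classical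
  obtain ⟨F, hF⟩ := TensorProduct.exists_finset t
  set c : A × ↥(ℳ 0) → G → A := fun p g => (DirectSum.decompose 𝒜 p.1 g : A) with hc
  set Γ : Finset G := F.sup fun p => (DirectSum.decompose 𝒜 p.1).support with hΓ
  have h1 : ∀ p ∈ F, (∑ g ∈ Γ, c p g) = p.1 := by
    intro p hp
    rw [← DirectSum.sum_support_decompose 𝒜 p.1]
    have hsub' : (DirectSum.decompose 𝒜 p.1).support ≤ Γ :=
      Finset.le_sup (f := fun p : A × ↥(ℳ 0) => (DirectSum.decompose 𝒜 p.1).support) hp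
    have hsub : (DirectSum.decompose 𝒜 p.1).support ⊆ Γ := hsub' 
    refine (Finset.sum_subset hsub fun g _ hg => ?_).symm
    rw [hc]
    simp only
    rw [DFinsupp.notMem_support_iff.mp hg]
    rfl
  -- rewrite mk t as a double sum
  have h2 : (Submodule.Quotient.mk t : (A ⊗[ℤ] ↥(ℳ 0)) ⧸ balancedRelFull 𝒜 ℳ)
      = ∑ g ∈ Γ, ∑ p ∈ F, Submodule.Quotient.mk (c p g ⊗ₜ[ℤ] p.2) := by
    rw [hF, ← Submodule.mkQ_apply, map_sum, ← Finset.sum_comm]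
    refine Finset.sum_congr rfl fun p hp => ?_
    rw [← h1 p hp, TensorProduct.sum_tmul, map_sum]
    exact Finset.sum_congr rfl fun g _ => rfl
  have h3 : ∀ g, (∑ p ∈ F, c p g • ((p.2 : M))) ∈ ℳ g := by
    intro g
    exact sum_mem fun p _ => gsmul_mem 𝒜 ℳ (SetLike.coe_mem _) p.2.2
  have h4 : (∑ g ∈ Γ, ∑ p ∈ F, c p g • ((p.2 : M))) = 0 := by
    rw [← ht, hF, map_sum]
    rw [Finset.sum_comm]
    refine Finset.sum_congr rfl fun p hp => ?_
    rw [tau0_tmul, ← h1 p hp, Finset.sum_smul]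
  have h5 : ∀ g ∈ Γ, (∑ p ∈ F, c p g • ((p.2 : M))) = 0 :=
    eq_zero_of_sum_mem_graded ℳ Γ _ h3 h4
  rw [h2]
  refine Finset.sum_eq_zero fun g hg => ?_
  exact sum_mk_eq_zero 𝒜 ℳ hS g F (fun p => c p g) (fun p => p.2)
    (fun p _ => SetLike.coe_mem _) (h5 g hg)
/-- If `S` is nearly epsilon-strongly graded (with each
`S_g S_{g⁻¹}` s-unital) and `M` is a graded left `S`-module, then the multiplication
map `τ_M : S ⊗_R M_e → ⊕_g (S_g S_{g⁻¹}) M_g = S(M)`, `s ⊗ m ↦ s m`, is an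
isomorphism of graded `S`-modules, where `(S ⊗_R M_e)_g = S_g ⊗_R M_e`: it is an
additive isomorphism given by multiplication on simple tensors, carrying the
`g`-th graded piece `S_g ⊗ M_e` into `(S_g S_{g⁻¹}) M_g`. -/
theorem tau_isomorphism_of_nearlyEpsilonStrong
    (hS : IsNearlyEpsilonStrong 𝒜)
    (hsu : ∀ g : G, IsSUnitalSub (𝒜 g * 𝒜 (-g))) :
    ∃ e : tensorFull 𝒜 ℳ ≃ₗ[ℤ] ↥(⨆ g : G, prodSMul (𝒜 g * 𝒜 (-g)) (ℳ g)),
      (∀ (s : A) (m : ↥(ℳ 0)),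
        ((e (Submodule.Quotient.mk (s ⊗ₜ[ℤ] m)) :
            ↥(⨆ g : G, prodSMul (𝒜 g * 𝒜 (-g)) (ℳ g))) : M) = s • m.1) ∧
      ∀ (g : G) (s : A), s ∈ 𝒜 g → ∀ m : ↥(ℳ 0),
        ((e (Submodule.Quotient.mk (s ⊗ₜ[ℤ] m)) :
            ↥(⨆ g : G, prodSMul (𝒜 g * 𝒜 (-g)) (ℳ g))) : M)
          ∈ prodSMul (𝒜 g * 𝒜 (-g)) (ℳ g) := by
  classical
  have hmem : ∀ x : tensorFull 𝒜 ℳ,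
      tauQ 𝒜 ℳ x ∈ ⨆ g : G, prodSMul (𝒜 g * 𝒜 (-g)) (ℳ g) := by
    intro x
    obtain ⟨t, rfl⟩ := Submodule.Quotient.mk_surjective _ x
    rw [tauQ_mk]
    induction t using TensorProduct.induction_on with
    | zero => rw [map_zero]; exact zero_mem _
    | tmul s m =>
      rw [tau0_tmul, ← DirectSum.sum_support_decompose 𝒜 s, Finset.sum_smul]
      refine sum_mem fun g _ => ?_
      exact le_iSup (fun g => prodSMul (𝒜 g * 𝒜 (-g)) (ℳ g)) g
        (homog_smul_mem_prod 𝒜 ℳ hS (SetLike.coe_mem _) m.2)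
    | add a b ha hb => rw [map_add]; exact add_mem ha hb
  let f : tensorFull 𝒜 ℳ →ₗ[ℤ] ↥(⨆ g : G, prodSMul (𝒜 g * 𝒜 (-g)) (ℳ g)) :=
    { toFun := fun x => ⟨tauQ 𝒜 ℳ x, hmem x⟩
      map_add' := fun x y => Subtype.ext (map_add (tauQ 𝒜 ℳ) x y)
      map_smul' := fun z x => Subtype.ext (map_smul (tauQ 𝒜 ℳ) z x) }
  have hinj : Function.Injective f := by
    intro x y hxy
    have h : tauQ 𝒜 ℳ x = tauQ 𝒜 ℳ y := congrArg Subtype.val hxy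
    obtain ⟨tx, rfl⟩ := Submodule.Quotient.mk_surjective _ x
    obtain ⟨ty, rfl⟩ := Submodule.Quotient.mk_surjective _ y
    rw [tauQ_mk, tauQ_mk] at h
    have h0 : tau0 ℳ (tx - ty) = 0 := by rw [map_sub, h, sub_self]
    have hz := mk_eq_zero_of_tau0_eq_zero 𝒜 ℳ hS h0
    exact (Submodule.Quotient.eq _).mpr ((Submodule.Quotient.mk_eq_zero _).mp hz)
  have hsurj : Function.Surjective f := by
    rintro ⟨x, hx⟩
    obtain ⟨t, ht⟩ := exists_preimage 𝒜 ℳ hx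
    exact ⟨Submodule.Quotient.mk t, Subtype.ext ht⟩
  refine ⟨LinearEquiv.ofBijective f ⟨hinj, hsurj⟩, fun s m => rfl, fun g s hs m => ?_⟩
  show ((f (Submodule.Quotient.mk (s ⊗ₜ[ℤ] m)) :
      ↥(⨆ g : G, prodSMul (𝒜 g * 𝒜 (-g)) (ℳ g))) : M) ∈ _
  exact homog_smul_mem_prod 𝒜 ℳ hS hs m.2

end Stmt19
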